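/- Let X₁ and X₂ be independent standard Gaussian random variables and set ξ = (X₁² − 1)/√2 and η = X₁·X₂. Then E[ξ η] = 0 (so the correlation coefficient of ξ and η is zero) while E[(ξ² − E ξ²)(η² − E η²)] = 4. In particular, the inequality |E f(ξ) g(η)| ≤ |ρ_{ξ,η}| (E f(ξ)²)^{1/2} (E g(η)²)^{1/2} fails for f(x) = g(x) = x² − 1. -/

import Mathlib

open MeasureTheory ProbabilityTheory Real Filter
open scoped ENNReal NNReal


noncomputable def Jg (n : ℕ) : ℝ := ∫ x : ℝ, x ^ n * Real.exp (-(1/2) * x ^ 2)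

lemma gInt (n : ℕ) : Integrable (fun x : ℝ => x ^ n * Real.exp (-(1/2) * x ^ 2)) := by
  have h : (-1 : ℝ) < n := neg_one_lt_zero.trans_le (Nat.cast_nonneg n)
  simpa [Real.rpow_natCast] using
    integrable_rpow_mul_exp_neg_mul_sq (b := 1/2) (by norm_num) (s := (n : ℝ)) h

lemma Jg_step (n : ℕ) : Jg (n + 2) = (n + 1) * Jg n := by
  have hd : ∀ x : ℝ, HasDerivAt (fun x : ℝ => x ^ (n+1) * Real.exp (-(1/2) * x ^ 2))
      (((n:ℝ)+1) * (x ^ n * Real.exp (-(1/2) * x ^ 2)) - x ^ (n+2) * Real.exp (-(1/2) * x ^ 2)) x := by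
    intro x
    have h1 := (hasDerivAt_pow (n+1) x).mul (((hasDerivAt_pow 2 x).const_mul (-(1/2 : ℝ))).exp)
    refine h1.congr_deriv ?_
    push_cast
    ring
  have h0 := integral_eq_zero_of_hasDerivAt_of_integrable hd
    (((gInt n).const_mul ((n:ℝ)+1)).sub (gInt (n+2))) (gInt (n+1))
  rw [integral_sub ((gInt n).const_mul ((n:ℝ)+1)) (gInt (n+2)), integral_const_mul] at h0
  unfold Jg
  linarith

lemma Jg_zero : Jg 0 = Real.sqrt (2 * π) := by
  unfold Jg
  simp only [pow_zero, one_mul]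
  rw [show (2:ℝ) * π = π / (1/2) by ring]
  exact integral_gaussian (1/2)

lemma Jg_one : Jg 1 = 0 := by
  have hd : ∀ x : ℝ, HasDerivAt (fun x : ℝ => -Real.exp (-(1/2) * x ^ 2))
      (x ^ 1 * Real.exp (-(1/2) * x ^ 2)) x := by
    intro x
    have h1 := (((hasDerivAt_pow 2 x).const_mul (-(1/2 : ℝ))).exp).neg
    refine h1.congr_deriv ?_
    push_cast
    ring
  exact integral_eq_zero_of_hasDerivAt_of_integrable hd (gInt 1)
    ((gInt 0).neg.congr (Eventually.of_forall fun x => by simp))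

noncomputable def gm (n : ℕ) : ℝ := ∫ x : ℝ, x ^ n ∂(gaussianReal 0 1)

lemma sqrt_two_pi_pos : (0:ℝ) < Real.sqrt (2 * π) := Real.sqrt_pos.mpr (by positivity)

lemma gaussianReal_eq : (gaussianReal 0 1 : Measure ℝ)
    = MeasureTheory.volume.withDensity (fun x => ((gaussianPDFReal 0 1 x).toNNReal : ℝ≥0∞)) := by
  rw [gaussianReal_of_var_ne_zero 0 one_ne_zero]
  rfl

lemma pdf_eq (x : ℝ) : gaussianPDFReal 0 1 x = (Real.sqrt (2*π))⁻¹ * Real.exp (-(1/2) * x ^ 2) := by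
  rw [gaussianPDFReal_def]
  norm_num
  exact Or.inl (by ring)

lemma gm_eq (n : ℕ) : gm n = (Real.sqrt (2 * π))⁻¹ * Jg n := by
  rw [gm, gaussianReal_eq,
    integral_withDensity_eq_integral_smul
      ((measurable_gaussianPDFReal 0 1).real_toNNReal) (fun x => x ^ n)]
  rw [Jg, ← integral_const_mul]
  congr 1 with x
  rw [NNReal.smul_def, Real.coe_toNNReal _ (gaussianPDFReal_nonneg 0 1 x), pdf_eq, smul_eq_mul]
  ring

lemma gm_integrable (n : ℕ) : Integrable (fun x : ℝ => x ^ n) (gaussianReal 0 1) := by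
  rw [gaussianReal_eq, integrable_withDensity_iff ((measurable_gaussianPDFReal 0 1).real_toNNReal.coe_nnreal_ennreal) (Eventually.of_forall fun x => ENNReal.coe_lt_top)]
  refine ((gInt n).const_mul ((Real.sqrt (2*π))⁻¹)).congr ?_
  refine Eventually.of_forall fun x => ?_
  show _ = x ^ n * (((gaussianPDFReal 0 1 x).toNNReal : ℝ≥0∞)).toReal
  rw [ENNReal.coe_toReal, Real.coe_toNNReal _ (gaussianPDFReal_nonneg 0 1 x), pdf_eq]
  ring

lemma gm_one : gm 1 = 0 := by rw [gm_eq, Jg_one, mul_zero]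
lemma gm_two : gm 2 = 1 := by
  rw [gm_eq, show (2:ℕ) = 0 + 2 by rfl, Jg_step, Jg_zero]
  push_cast
  rw [mul_comm, mul_assoc, mul_inv_cancel₀ sqrt_two_pi_pos.ne']
  norm_num
lemma gm_three : gm 3 = 0 := by
  rw [gm_eq, show (3:ℕ) = 1 + 2 by rfl, Jg_step, Jg_one]
  simp
lemma gm_four : gm 4 = 3 := by
  rw [gm_eq, show (4:ℕ) = 2 + 2 by rfl, Jg_step, (Jg_step 0 : Jg 2 = _), Jg_zero]
  push_cast
  field_simp
  ring
lemma gm_six : gm 6 = 15 := by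
  rw [gm_eq, show (6:ℕ) = 4 + 2 by rfl, Jg_step, show (4:ℕ) = 2 + 2 by rfl, Jg_step,
    show (2:ℕ) = 0 + 2 by rfl, Jg_step, Jg_zero]
  push_cast
  field_simp
  ring

lemma gm_zero : gm 0 = 1 := by simp [gm]

lemma pull_integrable {Ω : Type*} [MeasurableSpace Ω] {P : Measure Ω} {X : Ω → ℝ}
    (hX : Measurable X) (hl : P.map X = gaussianReal 0 1) (n : ℕ) :
    Integrable (fun ω => X ω ^ n) P := by
  have h := gm_integrable n
  rw [← hl] at h
  exact (integrable_map_measure (measurable_id.pow_const n).aestronglyMeasurable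
    hX.aemeasurable).mp h

lemma pull_moment {Ω : Type*} [MeasurableSpace Ω] {P : Measure Ω} {X : Ω → ℝ}
    (hX : Measurable X) (hl : P.map X = gaussianReal 0 1) (n : ℕ) :
    ∫ ω, X ω ^ n ∂P = gm n := by
  rw [gm, ← hl]
  exact (integral_map hX.aemeasurable
    (measurable_id.pow_const n).aestronglyMeasurable).symm

lemma my_integral_add {α : Type*} [MeasurableSpace α] {μ : Measure α} {f g : α → ℝ} {a b : ℝ}
    (hf : Integrable f μ) (hg : Integrable g μ)
    (ha : ∫ x, f x ∂μ = a) (hb : ∫ x, g x ∂μ = b) : ∫ x, f x + g x ∂μ = a + b := by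
  rw [integral_add hf hg, ha, hb]

/-- For independent standard Gaussians `X₁, X₂`, with `ξ = (X₁² − 1)/√2` and `η = X₁·X₂`,
one has `E[ξη] = 0` while `E[(ξ² − Eξ²)(η² − Eη²)] = 4`; in particular Gebelein's
inequality fails for `f(x) = g(x) = x² − 1`, where the correlation coefficient
`ρ_{ξ,η} = E[(ξ−Eξ)(η−Eη)] / ((E(ξ−Eξ)²)^{1/2} (E(η−Eη)²)^{1/2})`. -/
theorem gebelein_fails_in_second_chaos
    {Ω : Type*} [MeasurableSpace Ω] (P : Measure Ω) [IsProbabilityMeasure P]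
    (X₁ X₂ : Ω → ℝ) (h1 : Measurable X₁) (h2 : Measurable X₂)
    (hind : IndepFun X₁ X₂ P)
    (hl1 : P.map X₁ = gaussianReal 0 1) (hl2 : P.map X₂ = gaussianReal 0 1)
    (ξ η : Ω → ℝ)
    (hξ : ξ = fun ω => (X₁ ω ^ 2 - 1) / Real.sqrt 2)
    (hη : η = fun ω => X₁ ω * X₂ ω)
    (f g : ℝ → ℝ) (hf : f = fun x => x ^ 2 - 1) (hg : g = fun x => x ^ 2 - 1)
    (ρ : ℝ)
    (hρ : ρ = (∫ ω, (ξ ω - ∫ ω', ξ ω' ∂P) * (η ω - ∫ ω', η ω' ∂P) ∂P) /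
      (Real.sqrt (∫ ω, (ξ ω - ∫ ω', ξ ω' ∂P) ^ 2 ∂P) *
        Real.sqrt (∫ ω, (η ω - ∫ ω', η ω' ∂P) ^ 2 ∂P))) :
    (∫ ω, ξ ω * η ω ∂P = 0) ∧
      (∫ ω, (ξ ω ^ 2 - ∫ ω', ξ ω' ^ 2 ∂P) * (η ω ^ 2 - ∫ ω', η ω' ^ 2 ∂P) ∂P = 4) ∧
      ¬ (|∫ ω, f (ξ ω) * g (η ω) ∂P| ≤
          |ρ| * Real.sqrt (∫ ω, (f (ξ ω)) ^ 2 ∂P) * Real.sqrt (∫ ω, (g (η ω)) ^ 2 ∂P)) := by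
  subst hξ hη hf hg
  have m1 : ∀ n, ∫ ω, X₁ ω ^ n ∂P = gm n := pull_moment h1 hl1
  have m2 : ∀ n, ∫ ω, X₂ ω ^ n ∂P = gm n := pull_moment h2 hl2
  have i1 : ∀ n, Integrable (fun ω => X₁ ω ^ n) P := pull_integrable h1 hl1
  have i2 : ∀ n, Integrable (fun ω => X₂ ω ^ n) P := pull_integrable h2 hl2
  have hIab : ∀ a b : ℕ, Integrable (fun ω => X₁ ω ^ a * X₂ ω ^ b) P := fun a b =>
    (hind.comp (measurable_id.pow_const a) (measurable_id.pow_const b)).integrable_mul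
      (i1 a) (i2 b)
  have hEab : ∀ a b : ℕ, ∫ ω, X₁ ω ^ a * X₂ ω ^ b ∂P = gm a * gm b := fun a b => by
    have h : ∫ ω, X₁ ω ^ a * X₂ ω ^ b ∂P
        = (∫ ω, X₁ ω ^ a ∂P) * ∫ ω, X₂ ω ^ b ∂P :=
      (hind.comp (measurable_id.pow_const a)
        (measurable_id.pow_const b)).integral_mul_eq_mul_integral (i1 a).aestronglyMeasurable (i2 b).aestronglyMeasurable
    rw [m1, m2] at h
    exact h
  have hIc : ∀ (c : ℝ) (a b : ℕ), Integrable (fun ω => c * (X₁ ω ^ a * X₂ ω ^ b)) P :=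
    fun c a b => (hIab a b).const_mul c
  have hEc : ∀ (c : ℝ) (a b : ℕ), ∫ ω, c * (X₁ ω ^ a * X₂ ω ^ b) ∂P = c * (gm a * gm b) :=
    fun c a b => by rw [integral_const_mul, hEab]
  have s2 : (Real.sqrt 2) ^ 2 = 2 := Real.sq_sqrt (by norm_num)
  -- (A) E ξ = 0
  have hA : ∫ ω, (X₁ ω ^ 2 - 1) / Real.sqrt 2 ∂P = 0 := by
    have e : (fun ω => (X₁ ω ^ 2 - 1) / Real.sqrt 2)
        = fun ω => (Real.sqrt 2)⁻¹ * (X₁ ω ^ 2 * X₂ ω ^ 0)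
          + (-(Real.sqrt 2)⁻¹) * (X₁ ω ^ 0 * X₂ ω ^ 0) := funext fun ω => by ring
    rw [e, integral_add (hIc _ 2 0) (hIc _ 0 0), hEc, hEc, gm_zero, gm_two]
    ring
  -- (B) E η = 0
  have hB : ∫ ω, X₁ ω * X₂ ω ∂P = 0 := by
    have e : (fun ω => X₁ ω * X₂ ω) = fun ω => X₁ ω ^ 1 * X₂ ω ^ 1 :=
      funext fun ω => by ring
    rw [e, hEab, gm_one]
    ring
  -- (C) E ξη = 0
  have hC : ∫ ω, ((X₁ ω ^ 2 - 1) / Real.sqrt 2) * (X₁ ω * X₂ ω) ∂P = 0 := by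
    have e : (fun ω => ((X₁ ω ^ 2 - 1) / Real.sqrt 2) * (X₁ ω * X₂ ω))
        = fun ω => (Real.sqrt 2)⁻¹ * (X₁ ω ^ 3 * X₂ ω ^ 1)
          + (-(Real.sqrt 2)⁻¹) * (X₁ ω ^ 1 * X₂ ω ^ 1) := funext fun ω => by ring
    rw [e, integral_add (hIc _ 3 1) (hIc _ 1 1), hEc, hEc, gm_one, gm_three]
    ring
  -- (D) E ξ² = 1
  have hD : ∫ ω, ((X₁ ω ^ 2 - 1) / Real.sqrt 2) ^ 2 ∂P = 1 := by
    have e : (fun ω => ((X₁ ω ^ 2 - 1) / Real.sqrt 2) ^ 2)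
        = fun ω => (1/2 : ℝ) * (X₁ ω ^ 4 * X₂ ω ^ 0)
          + ((-1 : ℝ) * (X₁ ω ^ 2 * X₂ ω ^ 0) + (1/2 : ℝ) * (X₁ ω ^ 0 * X₂ ω ^ 0)) :=
      funext fun ω => by rw [div_pow, s2]; ring
    rw [e]
    have h := my_integral_add (hIc (1/2) 4 0) ((hIc (-1) 2 0).add (hIc (1/2) 0 0))
      (hEc (1/2) 4 0)
      (my_integral_add (hIc (-1) 2 0) (hIc (1/2) 0 0) (hEc (-1) 2 0) (hEc (1/2) 0 0))
    rw [gm_zero, gm_two, gm_four] at h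
    simp only [Pi.add_apply] at h
    rw [h]; norm_num
  -- (E) E η² = 1
  have hE : ∫ ω, (X₁ ω * X₂ ω) ^ 2 ∂P = 1 := by
    have e : (fun ω => (X₁ ω * X₂ ω) ^ 2) = fun ω => X₁ ω ^ 2 * X₂ ω ^ 2 :=
      funext fun ω => by ring
    rw [e, hEab, gm_two]
    ring
  -- (F) E (ξ²-1)(η²-1) = 4
  have hF : ∫ ω, (((X₁ ω ^ 2 - 1) / Real.sqrt 2) ^ 2 - 1) * ((X₁ ω * X₂ ω) ^ 2 - 1) ∂P
      = 4 := by
    have e : (fun ω => (((X₁ ω ^ 2 - 1) / Real.sqrt 2) ^ 2 - 1) * ((X₁ ω * X₂ ω) ^ 2 - 1))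
        = fun ω => (1/2 : ℝ) * (X₁ ω ^ 6 * X₂ ω ^ 2)
          + ((-1 : ℝ) * (X₁ ω ^ 4 * X₂ ω ^ 2)
          + ((-1/2 : ℝ) * (X₁ ω ^ 2 * X₂ ω ^ 2)
          + ((-1/2 : ℝ) * (X₁ ω ^ 4 * X₂ ω ^ 0)
          + ((1 : ℝ) * (X₁ ω ^ 2 * X₂ ω ^ 0)
          + (1/2 : ℝ) * (X₁ ω ^ 0 * X₂ ω ^ 0))))) :=
      funext fun ω => by rw [div_pow, s2]; ring
    rw [e]
    have h := my_integral_add (hIc (1/2) 6 2) ((hIc (-1) 4 2).add ((hIc (-1/2) 2 2).add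
        ((hIc (-1/2) 4 0).add ((hIc 1 2 0).add (hIc (1/2) 0 0))))) (hEc (1/2) 6 2)
      (my_integral_add (hIc (-1) 4 2) ((hIc (-1/2) 2 2).add ((hIc (-1/2) 4 0).add
          ((hIc 1 2 0).add (hIc (1/2) 0 0)))) (hEc (-1) 4 2)
        (my_integral_add (hIc (-1/2) 2 2) ((hIc (-1/2) 4 0).add ((hIc 1 2 0).add
            (hIc (1/2) 0 0))) (hEc (-1/2) 2 2)
          (my_integral_add (hIc (-1/2) 4 0) ((hIc 1 2 0).add (hIc (1/2) 0 0)) (hEc (-1/2) 4 0)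
            (my_integral_add (hIc 1 2 0) (hIc (1/2) 0 0) (hEc 1 2 0) (hEc (1/2) 0 0)))))
    rw [gm_zero, gm_two, gm_four, gm_six] at h
    simp only [Pi.add_apply] at h
    rw [h]; norm_num
  refine ⟨hC, ?_, ?_⟩
  · rw [hD, hE]
    exact hF
  · have hρ0 : ρ = 0 := by
      rw [hρ, hA, hB]
      simp only [sub_zero, hC, zero_div]
    simp only [hρ0, abs_zero, zero_mul]
    have h4 : ∫ ω, ((((X₁ ω ^ 2 - 1) / Real.sqrt 2)) ^ 2 - 1)
        * (((X₁ ω * X₂ ω)) ^ 2 - 1) ∂P = 4 := hF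
    rw [h4]
    norm_num
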